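/- If F ⊆ ℝⁿ is a nonempty compact convex set and z ∉ F, then the maximizer ψ* ∈ Sₙ of ψ ↦ ⟨z, ψ⟩ − c(F, ψ) over the unit sphere Sₙ is unique, and equals (z − p)/‖z − p‖ where p is the metric projection of z onto F. -/

import Mathlib

/-- The support function `c(F, ψ) = sup_{f ∈ F} ⟨f, ψ⟩` of a set `F ⊆ ℝⁿ`. -/
noncomputable def supportFn {n : ℕ} (F : Set (EuclideanSpace ℝ (Fin n)))
    (ψ : EuclideanSpace ℝ (Fin n)) : ℝ :=
  sSup ((fun f => (inner ℝ f ψ : ℝ)) '' F)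

/-- If `z ∉ F` then the maximizer over the unit sphere of `ψ ↦ ⟨z, ψ⟩ − c(F, ψ)` is
unique and equals `(z − p)/‖z − p‖`, where `p` is the metric projection of `z` onto `F`. -/
theorem unique_maximizer_of_not_mem (n : ℕ) (F : Set (EuclideanSpace ℝ (Fin n)))
    (hc : IsCompact F) (hconv : Convex ℝ F) (hne : F.Nonempty)
    (z : EuclideanSpace ℝ (Fin n)) (hz : z ∉ F)
    (p : EuclideanSpace ℝ (Fin n)) (hp : p ∈ F) (hpmin : ∀ y ∈ F, dist z p ≤ dist z y) :
    (‖(‖z - p‖)⁻¹ • (z - p)‖ = 1 ∧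
      ∀ φ : EuclideanSpace ℝ (Fin n), ‖φ‖ = 1 →
        (inner ℝ z φ : ℝ) - supportFn F φ ≤
          (inner ℝ z ((‖z - p‖)⁻¹ • (z - p)) : ℝ) - supportFn F ((‖z - p‖)⁻¹ • (z - p))) ∧
    ∀ ψ : EuclideanSpace ℝ (Fin n), ‖ψ‖ = 1 →
      (∀ φ : EuclideanSpace ℝ (Fin n), ‖φ‖ = 1 →
        (inner ℝ z φ : ℝ) - supportFn F φ ≤ (inner ℝ z ψ : ℝ) - supportFn F ψ) →
      ψ = (‖z - p‖)⁻¹ • (z - p) := by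
  have hzp : z - p ≠ 0 := sub_ne_zero.mpr (fun h => hz (h ▸ hp))
  set d : ℝ := ‖z - p‖ with hd
  have hd0 : 0 < d := norm_pos_iff.mpr hzp
  set ψs : EuclideanSpace ℝ (Fin n) := d⁻¹ • (z - p) with hψs
  have hψsnorm : ‖ψs‖ = 1 := by
    rw [hψs, norm_smul, Real.norm_eq_abs, abs_inv, abs_of_pos hd0]
    field_simp
    exact hd.symm
  -- projection inequality
  have hproj : ∀ f ∈ F, (inner ℝ (z - p) (f - p) : ℝ) ≤ 0 := by
    haveI : Nonempty F := hne.to_subtype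
    have key : ‖z - p‖ = ⨅ w : F, ‖z - (w : EuclideanSpace ℝ (Fin n))‖ := by
      refine le_antisymm (le_ciInf fun w => ?_) (ciInf_le ⟨0, ?_⟩ (⟨p, hp⟩ : F))
      · simpa [dist_eq_norm] using hpmin w w.2
      · rintro x ⟨w, rfl⟩; positivity
    exact fun f hf => (norm_eq_iInf_iff_real_inner_le_zero hconv hp (u := z)).mp key f hf
  -- bddAbove for support function
  have hbdd : ∀ φ : EuclideanSpace ℝ (Fin n), BddAbove ((fun f => (inner ℝ f φ : ℝ)) '' F) := by
    intro φ
    exact (hc.image (continuous_id.inner continuous_const)).bddAbove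
  have hle : ∀ φ : EuclideanSpace ℝ (Fin n), (inner ℝ p φ : ℝ) ≤ supportFn F φ := by
    intro φ
    exact le_csSup (hbdd φ) ⟨p, hp, rfl⟩
  -- support at ψs
  have hsupp : supportFn F ψs = (inner ℝ p ψs : ℝ) := by
    refine le_antisymm (csSup_le (hne.image _) ?_) (hle ψs)
    rintro x ⟨f, hf, rfl⟩
    have h1 : (inner ℝ (z - p) (f - p) : ℝ) ≤ 0 := hproj f hf
    have h2 : (inner ℝ f ψs : ℝ) - (inner ℝ p ψs : ℝ) = d⁻¹ * (inner ℝ (z - p) (f - p) : ℝ) := by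
      simp only [hψs, real_inner_smul_right, inner_sub_left, inner_sub_right]
      rw [real_inner_comm f z, real_inner_comm f p, real_inner_comm p z]
      ring
    nlinarith [inv_pos.mpr hd0]
  -- value at ψs is d
  have hval : (inner ℝ z ψs : ℝ) - supportFn F ψs = d := by
    rw [hsupp]
    have : (inner ℝ z ψs : ℝ) - (inner ℝ p ψs : ℝ) = (inner ℝ (z - p) ψs : ℝ) := by
      rw [inner_sub_left]
    rw [this, hψs, real_inner_smul_right, real_inner_self_eq_norm_sq]
    rw [← hd]; field_simp
  -- value at any unit φ is at most d
  have hub : ∀ φ : EuclideanSpace ℝ (Fin n), ‖φ‖ = 1 →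
      (inner ℝ z φ : ℝ) - supportFn F φ ≤ d := by
    intro φ hφ
    have h1 : (inner ℝ z φ : ℝ) - supportFn F φ ≤ (inner ℝ (z - p) φ : ℝ) := by
      have := hle φ
      rw [inner_sub_left]; linarith
    have h2 : (inner ℝ (z - p) φ : ℝ) ≤ ‖z - p‖ * ‖φ‖ := real_inner_le_norm _ _
    rw [hφ, mul_one] at h2
    linarith
  refine ⟨⟨hψsnorm, fun φ hφ => by rw [hval]; exact hub φ hφ⟩, ?_⟩
  intro ψ hψ hmax
  have h1 : d ≤ (inner ℝ z ψ : ℝ) - supportFn F ψ := by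
    have := hmax ψs hψsnorm
    rw [hval] at this
    exact this
  have h2 : d ≤ (inner ℝ (z - p) ψ : ℝ) := by
    have := hle ψ
    rw [inner_sub_left]; linarith
  have h3 : (inner ℝ (z - p) ψ : ℝ) = ‖z - p‖ * ‖ψ‖ := by
    have := real_inner_le_norm (z - p) ψ
    rw [hψ, mul_one] at this ⊢
    linarith
  have h4 := (inner_eq_norm_mul_iff_real).mp h3
  rw [hψ, one_smul] at h4
  rw [hψs, h4, ← hd, smul_smul, inv_mul_cancel₀ (ne_of_gt hd0), one_smul]
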